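/- arXiv:0809.3683 — 2 statements merged into one kernel-verified Lean document; each statement's English description precedes it below -/
import Mathlib

section
/- For every m ≥ 1 and n ≥ 1, the number of pairs (σ, a), where σ is a permutation of {1,...,n} and a = (a_1,...,a_n) is a sequence of nonnegative integers with a_1 = 0, a_{s+1} ≤ a_s + m for all s, and σ(s) < σ(s+1) whenever a_{s+1} = a_s + m, equals (mn+1)^(n-1). -/
open Finset

namespace MDyck

def cnt {n : ℕ} (x : Fin n → ℕ) (r : ℕ) : ℕ := (Finset.univ.filter (fun i => x i < r)).card

def IsPF (m n : ℕ) (f : Fin n → ℕ) : Prop := ∀ k, 1 ≤ k → k ≤ m * n → k ≤ m * cnt f k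

lemma cnt_le {n : ℕ} (x : Fin n → ℕ) (r : ℕ) : cnt x r ≤ n := by
  refine le_trans (Finset.card_filter_le _ _) (by simp)

lemma cnt_mono {n : ℕ} (x : Fin n → ℕ) : Monotone (cnt x) := by
  intro a b hab
  refine Finset.card_le_card (fun i hi => ?_)
  simp only [Finset.mem_filter] at hi ⊢
  exact ⟨hi.1, lt_of_lt_of_le hi.2 hab⟩

lemma cnt_eq_n {n : ℕ} (x : Fin n → ℕ) (r : ℕ) (h : ∀ i, x i < r) : cnt x r = n := by
  simp only [cnt]
  rw [Finset.filter_true_of_mem (fun i _ => h i)]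
  simp

lemma lt_of_cnt_eq_n {n : ℕ} (x : Fin n → ℕ) (r : ℕ) (h : n ≤ cnt x r) (i : Fin n) : x i < r := by
  by_contra hc
  have : (Finset.univ.filter (fun j => x j < r)) ⊆ Finset.univ.erase i := by
    intro j hj
    simp only [Finset.mem_filter] at hj
    refine Finset.mem_erase.2 ⟨?_, Finset.mem_univ _⟩
    rintro rfl; exact hc hj.2
  have := Finset.card_le_card this
  rw [Finset.card_erase_of_mem (Finset.mem_univ i), Finset.card_univ, Fintype.card_fin] at this
  have hn : 0 < n := i.pos
  simp only [cnt] at h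
  omega

/-- For monotone `g`, `s < cnt g k ↔ g s < k`. -/
lemma count_mono_iff {n : ℕ} (g : Fin n → ℕ) (hg : Monotone g) (k : ℕ) (s : Fin n) :
    (s : ℕ) < cnt g k ↔ g s < k := by
  constructor
  · intro h
    by_contra hc
    push_neg at hc
    have hsub : (Finset.univ.filter (fun t => g t < k)) ⊆ Finset.Iio s := by
      intro t ht
      simp only [Finset.mem_filter] at ht
      rw [Finset.mem_Iio]
      by_contra htc
      push_neg at htc
      exact absurd (lt_of_lt_of_le ht.2 (hc.trans (hg htc))) (lt_irrefl _)
    have := Finset.card_le_card hsub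
    rw [Fin.card_Iio] at this
    simp only [cnt] at h
    omega
  · intro h
    have hsub : Finset.Iic s ⊆ Finset.univ.filter (fun t => g t < k) := by
      intro t ht
      rw [Finset.mem_Iic] at ht
      exact Finset.mem_filter.2 ⟨Finset.mem_univ _, lt_of_le_of_lt (hg ht) h⟩
    have := Finset.card_le_card hsub
    rw [Fin.card_Iic] at this
    simp only [cnt]
    omega

/-- count is invariant under permutation reindexing. -/
lemma cnt_comp_perm {n : ℕ} (f : Fin n → ℕ) (σ : Equiv.Perm (Fin n)) (k : ℕ) :
    cnt (f ∘ σ) k = cnt f k := by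
  simp only [cnt]
  apply Finset.card_bij (fun s _ => σ s)
  · intro s hs
    simp only [Finset.mem_filter, Function.comp] at hs ⊢
    exact ⟨Finset.mem_univ _, hs.2⟩
  · intro a _ b _ hab
    exact σ.injective hab
  · intro i hi
    simp only [Finset.mem_filter, Function.comp] at hi ⊢
    exact ⟨σ.symm i, by simp [hi.2], by simp⟩

/-- Sorted characterization implies counting characterization and back. -/
lemma sortedPF_iff_isPF (m n : ℕ) (hm : 1 ≤ m) (hn : 0 < n) (f : Fin n → ℕ) :
    (∀ s : Fin n, f (Tuple.sort f s) ≤ m * s) ↔ IsPF m n f := by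
  set σ := Tuple.sort f with hσ
  have hmono : Monotone (f ∘ σ) := Tuple.monotone_sort f
  constructor
  · intro hs k hk1 hk2
    -- choose s₀ = min ((k-1)/m) (n-1)
    have hs0 : min ((k-1)/m) (n-1) < n := by omega
    set s₀ : Fin n := ⟨min ((k-1)/m) (n-1), hs0⟩ with hs₀
    have h1 : f (σ s₀) < k := by
      have := hs s₀
      have h2 : m * (s₀ : ℕ) ≤ k - 1 := by
        rcases le_total ((k-1)/m) (n-1) with hc | hc
        · have : (s₀ : ℕ) = (k-1)/m := by simp [hs₀, min_eq_left hc]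
          rw [this]
          exact Nat.mul_div_le _ _
        · have hv : (s₀ : ℕ) = n - 1 := by simp [hs₀, min_eq_right hc]
          rw [hv]
          have := Nat.div_mul_le_self (k-1) m
          have h3 : m * (n-1) ≤ m * ((k-1)/m) := Nat.mul_le_mul_left m hc
          calc m * (n-1) ≤ m * ((k-1)/m) := h3
            _ ≤ k - 1 := Nat.mul_div_le _ _
      omega
    have hcnt : (s₀ : ℕ) < cnt (f ∘ σ) k := (count_mono_iff _ hmono k s₀).2 h1
    rw [cnt_comp_perm] at hcnt
    -- now m * cnt ≥ k
    rcases le_total ((k-1)/m) (n-1) with hc | hc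
    · have hv : (s₀ : ℕ) = (k-1)/m := by simp [hs₀, min_eq_left hc]
      have := Nat.div_add_mod (k-1) m
      have hmod : (k-1) % m < m := Nat.mod_lt _ (by omega)
      have hx : m * ((k-1)/m + 1) = m * ((k-1)/m) + m := by ring
      have : m * ((k-1)/m + 1) ≥ k := by omega
      have hge : (k-1)/m + 1 ≤ cnt f k := by omega
      calc k ≤ m * ((k-1)/m + 1) := this
        _ ≤ m * cnt f k := Nat.mul_le_mul_left m hge
    · have hv : (s₀ : ℕ) = n - 1 := by simp [hs₀, min_eq_right hc]
      have hge : n ≤ cnt f k := by omega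
      calc k ≤ m * n := hk2
        _ ≤ m * cnt f k := Nat.mul_le_mul_left m hge
  · intro hpf s
    have hk1 : 1 ≤ m * (s:ℕ) + 1 := by omega
    have hk2 : m * (s:ℕ) + 1 ≤ m * n := by
      have : (s:ℕ) + 1 ≤ n := s.2
      nlinarith
    have := hpf (m * (s:ℕ) + 1) hk1 hk2
    have hcnt : (s : ℕ) < cnt f (m * (s:ℕ) + 1) := by
      by_contra hc
      push_neg at hc
      have : m * cnt f (m * (s:ℕ) + 1) ≤ m * (s:ℕ) := Nat.mul_le_mul_left m hc
      omega
    rw [← cnt_comp_perm f σ] at hcnt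
    have := (count_mono_iff _ hmono _ s).1 hcnt
    simpa using Nat.lt_succ_iff.mp this


/-! ### Cycle lemma -/

lemma shift_lt_iff (N c k t : ℕ) (hc : c < N) (ht : t < N) :
    (t + (N - c)) % N < k ↔ (c ≤ t ∧ t < c + k) ∨ (t < c ∧ t + N < c + k) := by
  rcases le_or_gt c t with h | h
  · have h1 : t + (N - c) = (t - c) + N := by omega
    rw [h1, Nat.add_mod_right, Nat.mod_eq_of_lt (by omega)]
    omega
  · rw [Nat.mod_eq_of_lt (by omega)]
    omega

/-- case `c + k ≤ N` : counting identity. -/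
lemma shift_cnt_low {n : ℕ} (x : Fin n → ℕ) (N c k : ℕ) (hc : c < N) (hx : ∀ i, x i < N)
    (hck : c + k ≤ N) :
    cnt (fun i => (x i + (N - c)) % N) k + cnt x c = cnt x (c + k) := by
  classical
  simp only [cnt]
  rw [← Finset.card_union_of_disjoint]
  · congr 1
    ext i
    simp only [Finset.mem_union, Finset.mem_filter, Finset.mem_univ, true_and]
    rw [shift_lt_iff N c k (x i) hc (hx i)]
    have := hx i
    omega
  · rw [Finset.disjoint_filter]
    intro i _ hi
    rw [shift_lt_iff N c k (x i) hc (hx i)] at hi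
    omega

/-- case `N ≤ c + k` : counting identity. -/
lemma shift_cnt_high {n : ℕ} (x : Fin n → ℕ) (N c k : ℕ) (hc : c < N) (hx : ∀ i, x i < N)
    (hck : N ≤ c + k) (hk : k ≤ N) :
    cnt (fun i => (x i + (N - c)) % N) k + cnt x c = n + cnt x (c + k - N) := by
  classical
  simp only [cnt]
  have h1 : (Finset.univ.filter (fun i => (x i + (N - c)) % N < k)) =
      (Finset.univ.filter (fun i => c ≤ x i)) ∪ (Finset.univ.filter (fun i => x i < c + k - N)) := by
    ext i
    simp only [Finset.mem_union, Finset.mem_filter, Finset.mem_univ, true_and]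
    rw [shift_lt_iff N c k (x i) hc (hx i)]
    have := hx i
    omega
  rw [h1, Finset.card_union_of_disjoint]
  · have h2 : (Finset.univ.filter (fun i => c ≤ x i)).card +
        (Finset.univ.filter (fun i => x i < c)).card = n := by
      rw [← Finset.card_union_of_disjoint (by
        rw [Finset.disjoint_filter]; intro i _ hi; omega)]
      have hu : (Finset.univ.filter (fun i => c ≤ x i)) ∪
          (Finset.univ.filter (fun i => x i < c)) = (Finset.univ : Finset (Fin n)) := by
        ext i
        simp only [Finset.mem_union, Finset.mem_filter, Finset.mem_univ, true_and, iff_true]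
        omega
      rw [hu, Finset.card_univ, Fintype.card_fin]
    omega
  · rw [Finset.disjoint_filter]
    intro i _ hi
    omega

variable {n : ℕ}

/-- The quasi-periodic height function. -/
noncomputable def Dfun (m n : ℕ) (x : Fin n → ℕ) (q : ℕ) : ℤ :=
  (m : ℤ) * cnt x (q % (m*n+1)) + (m : ℤ) * (n : ℤ) * ((q / (m*n+1) : ℕ) : ℤ) - q

lemma Dfun_small (m : ℕ) (x : Fin n → ℕ) (q : ℕ) (hq : q < m*n+1) :
    Dfun m n x q = (m : ℤ) * cnt x q - q := by
  rw [Dfun, Nat.mod_eq_of_lt hq, Nat.div_eq_of_lt hq]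
  push_cast
  ring

lemma Dfun_mid (m : ℕ) (x : Fin n → ℕ) (q : ℕ) (hq1 : m*n+1 ≤ q) (hq2 : q < 2*(m*n+1)) :
    Dfun m n x q = (m : ℤ) * cnt x (q - (m*n+1)) + (m*n : ℤ) - q := by
  have h1 : q % (m*n+1) = q - (m*n+1) := by
    rw [Nat.mod_eq_sub_mod hq1, Nat.mod_eq_of_lt (by omega)]
  have h2 : q / (m*n+1) = 1 := by
    have hq3 : q = (q - (m*n+1)) + (m*n+1) := by omega
    rw [hq3, Nat.add_div_right _ (by omega), Nat.div_eq_of_lt (by omega)]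
  rw [Dfun, h1, h2]
  push_cast
  ring

lemma Dfun_period (m : ℕ) (x : Fin n → ℕ) (q : ℕ) :
    Dfun m n x (q + (m*n+1)) = Dfun m n x q - 1 := by
  rw [Dfun, Dfun, Nat.add_mod_right, Nat.add_div_right _ (by omega)]
  push_cast
  ring

/-- The Good predicate in terms of `Dfun`. -/
lemma isPF_shift_iff (m : ℕ) (hm : 1 ≤ m) (x : Fin n → ℕ) (c : ℕ)
    (hc : c < m*n+1) (hx : ∀ i, x i < m*n+1) :
    IsPF m n (fun i => (x i + (m*n+1 - c)) % (m*n+1)) ↔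
      (∀ k, 1 ≤ k → k ≤ m*n → Dfun m n x c ≤ Dfun m n x (c + k)) := by
  have hDc : Dfun m n x c = (m:ℤ) * cnt x c - c := Dfun_small m x c hc
  refine forall_congr' (fun k => imp_congr_right fun hk1 => imp_congr_right fun hk2 => ?_)
  rcases lt_or_ge (c + k) (m*n+1) with h | h
  · have hid := shift_cnt_low x (m*n+1) c k hc hx (le_of_lt h)
    rw [Dfun_small m x (c+k) h, hDc]
    have hmul := congrArg (fun t => m * t) hid
    simp only [Nat.mul_add] at hmul
    zify at hmul ⊢
    omega
  · have hid := shift_cnt_high x (m*n+1) c k hc hx h (by omega)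
    rw [Dfun_mid m x (c+k) h (by omega), hDc]
    have hmul := congrArg (fun t => m * t) hid
    simp only [Nat.mul_add] at hmul
    zify at hmul ⊢
    push_cast at hmul ⊢
    omega


open Classical in
/-- Existence and uniqueness of the good shift. -/
lemma exists_unique_shift (m : ℕ) (hm : 1 ≤ m) (hn : 0 < n) (x : Fin n → ℕ)
    (hx : ∀ i, x i < m*n+1) :
    ∃! c : ℕ, c < m*n+1 ∧ IsPF m n (fun i => (x i + (m*n+1 - c)) % (m*n+1)) := by
  set D : ℕ → ℤ := Dfun m n x with hD
  have hper : ∀ q, D (q + (m*n+1)) = D q - 1 := fun q => Dfun_period m x q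
  -- Good predicate
  set Good : ℕ → Prop := fun c => ∀ k, 1 ≤ k → k ≤ m*n → D c ≤ D (c + k) with hGood
  -- two distinct good shifts below m*n+1 are impossible
  have absurd2 : ∀ c1 c2, c1 < c2 → c2 < m*n+1 → Good c1 → Good c2 → False := by
    intro c1 c2 h12 h2N hg1 hg2
    have ha : D c1 ≤ D c2 := by
      have := hg1 (c2 - c1) (by omega) (by omega)
      rwa [show c1 + (c2 - c1) = c2 by omega] at this
    have hb : D c2 ≤ D c1 - 1 := by
      have := hg2 (c1 + (m*n+1) - c2) (by omega) (by omega)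
      rwa [show c2 + (c1 + (m*n+1) - c2) = c1 + (m*n+1) by omega, hper c1] at this
    omega
  -- the first minimizer
  have hP : ∃ q, q < m*n+1 ∧ ∀ r, r < m*n+1 → D q ≤ D r := by
    obtain ⟨c0, hc0, hmin⟩ := Finset.exists_min_image (Finset.range (m*n+1)) D
      ⟨0, Finset.mem_range.2 (by omega)⟩
    exact ⟨c0, Finset.mem_range.1 hc0, fun r hr => hmin r (Finset.mem_range.2 hr)⟩
  set c := Nat.find hP with hc
  obtain ⟨hcN, hcmin⟩ := Nat.find_spec hP
  have hstrict : ∀ r, r < c → D c < D r := by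
    intro r hr
    have hrN : r < m*n+1 := lt_trans hr hcN
    have h1 : D c ≤ D r := hcmin r hrN
    rcases lt_or_eq_of_le h1 with h | h
    · exact h
    · exfalso
      exact Nat.find_min hP hr ⟨hrN, fun r' hr' => h ▸ hcmin r' hr'⟩
  have hgood : Good c := by
    intro k hk1 hk2
    rcases lt_or_ge (c + k) (m*n+1) with h | h
    · exact hcmin _ h
    · have hr : c + k - (m*n+1) < c := by omega
      have : D (c + k) = D (c + k - (m*n+1)) - 1 := by
        rw [← hper (c + k - (m*n+1)), show c + k - (m*n+1) + (m*n+1) = c + k by omega]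
      rw [this]
      have := hstrict _ hr
      omega
  refine ⟨c, ⟨hcN, (isPF_shift_iff m hm x c hcN hx).2 hgood⟩, ?_⟩
  intro c' ⟨hc'N, hc'pf⟩
  have hgood' : Good c' := (isPF_shift_iff m hm x c' hc'N hx).1 hc'pf
  rcases lt_trichotomy c' c with h | h | h
  · exact absurd (absurd2 c' c h hcN hgood' hgood) (not_false)
  · exact h
  · exact absurd (absurd2 c c' h hc'N hgood hgood') (not_false)


lemma pf_lt (m : ℕ) (hm : 1 ≤ m) (f : Fin n → ℕ) (hf : IsPF m n f) (i : Fin n) :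
    f i < m*n+1 := by
  have hn : 0 < n := i.pos
  have h1 : 1 ≤ m*n := by
    have := Nat.mul_le_mul hm hn
    omega
  have h2 := hf (m*n) h1 le_rfl
  have h3 : n ≤ cnt f (m*n) := by
    have := Nat.le_of_mul_le_mul_left (by omega : m * n ≤ m * cnt f (m*n)) (by omega : 0 < m)
    exact this
  have := lt_of_cnt_eq_n f (m*n) h3 i
  omega

lemma mod_helper (N a c : ℕ) (ha : a < N) (hc : c ≤ N) :
    ((a + (N - c)) % N + c) % N = a := by
  rw [Nat.mod_add_mod, show a + (N - c) + c = a + N by omega, Nat.add_mod_right,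
    Nat.mod_eq_of_lt ha]

lemma mod_helper2 (N a c : ℕ) (ha : a < N) (hc : c ≤ N) :
    ((a + c) % N + (N - c)) % N = a := by
  rw [Nat.mod_add_mod, show a + c + (N - c) = a + N by omega, Nat.add_mod_right,
    Nat.mod_eq_of_lt ha]

/-- The number of m-parking functions. -/
lemma card_PF (m : ℕ) (hm : 1 ≤ m) (hn : 0 < n) :
    Nat.card {f : Fin n → ℕ // IsPF m n f} * (m*n+1) = (m*n+1)^n := by
  classical
  set N := m*n+1 with hN
  have hNpos : 0 < N := by omega
  set Ψ : {f : Fin n → ℕ // IsPF m n f} × Fin N → (Fin n → Fin N) :=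
    fun p i => ⟨(p.1.1 i + (p.2 : ℕ)) % N, Nat.mod_lt _ hNpos⟩ with hΨ
  have hbij : Function.Bijective Ψ := by
    constructor
    · rintro ⟨f, c⟩ ⟨f', c'⟩ h
      -- both c and c' are good shifts for x := Ψ (f,c)
      set u := Ψ (⟨f, c⟩ : {f : Fin n → ℕ // IsPF m n f} × Fin N) with hu
      have hx : ∀ i, ((u i : ℕ)) < N := fun i => (u i).2
      obtain ⟨c0, _, huniq⟩ := exists_unique_shift m hm hn (fun i => (u i : ℕ)) hx
      have key : ∀ (g : {f : Fin n → ℕ // IsPF m n f}) (d : Fin N),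
          Ψ (g, d) = u → (d : ℕ) = c0 ∧ g.1 = fun i => ((u i : ℕ) + (N - d)) % N := by
        rintro g d hgd
        have hgval : ∀ i, ((u i : ℕ) + (N - (d:ℕ))) % N = g.1 i := by
          intro i
          have : (u i : ℕ) = (g.1 i + (d:ℕ)) % N := by
            rw [← hgd]
          rw [this, mod_helper2 N (g.1 i) d (pf_lt m hm g.1 g.2 i) (le_of_lt d.2)]
        have hpf' : IsPF m n (fun i => ((u i : ℕ) + (N - (d:ℕ))) % N) := by
          have : (fun i => ((u i : ℕ) + (N - (d:ℕ))) % N) = g.1 := funext hgval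
          rw [this]; exact g.2
        have := huniq (d : ℕ) ⟨d.2, hpf'⟩
        exact ⟨this, (funext hgval).symm⟩
      obtain ⟨hc1, hf1⟩ := key f c rfl
      obtain ⟨hc2, hf2⟩ := key f' c' h.symm
      have hcc : c = c' := Fin.ext (by omega)
      have hff : f = f' := Subtype.ext (by rw [hf1, hf2, hcc])
      rw [hcc, hff]
    · intro u
      have hx : ∀ i, ((u i : ℕ)) < N := fun i => (u i).2
      obtain ⟨c, ⟨hcN, hcpf⟩, _⟩ := exists_unique_shift m hm hn (fun i => (u i : ℕ)) hx
      refine ⟨⟨⟨fun i => ((u i : ℕ) + (N - c)) % N, hcpf⟩, ⟨c, hcN⟩⟩, ?_⟩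
      funext i
      apply Fin.ext
      show (((u i : ℕ) + (N - c)) % N + c) % N = (u i : ℕ)
      exact mod_helper N (u i) c (hx i) (le_of_lt hcN)
  calc Nat.card {f : Fin n → ℕ // IsPF m n f} * N
      = Nat.card ({f : Fin n → ℕ // IsPF m n f} × Fin N) := by
        rw [Nat.card_prod, Nat.card_eq_fintype_card (α := Fin N), Fintype.card_fin]
    _ = Nat.card (Fin n → Fin N) := Nat.card_congr (Equiv.ofBijective Ψ hbij)
    _ = N^n := by simp [Nat.card_eq_fintype_card]


lemma mono_of_adjacent {n : ℕ} (g : Fin n → ℕ)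
    (h : ∀ (j:ℕ) (hj : j+1 < n), g ⟨j, by omega⟩ ≤ g ⟨j+1, hj⟩) : Monotone g := by
  have key : ∀ (j : ℕ) (hj : j < n) (i : Fin n), (i:ℕ) ≤ j → g i ≤ g ⟨j, hj⟩ := by
    intro j
    induction j with
    | zero => intro hj i hi
              have hi0 : (i:ℕ) = 0 := by omega
              have : i = ⟨0, hj⟩ := Fin.ext (by simp [hi0])
              rw [this]
    | succ j' ih =>
        intro hj i hi
        rcases Nat.lt_or_ge (i:ℕ) (j'+1) with hlt | hge
        · exact le_trans (ih (by omega) i (by omega)) (h j' hj)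
        · have hi0 : (i:ℕ) = j'+1 := by omega
          have : i = ⟨j'+1, hj⟩ := Fin.ext (by simp [hi0])
          rw [this]
  intro i j hij
  exact key (j:ℕ) j.2 i hij

lemma perm_lt_of_ties {n : ℕ} (σ : Equiv.Perm (Fin n)) (g : Fin n → ℕ) (hmono : Monotone g)
    (hadj : ∀ (j:ℕ) (hj : j+1 < n), g ⟨j+1, hj⟩ = g ⟨j, by omega⟩ → σ ⟨j, by omega⟩ < σ ⟨j+1, hj⟩) :
    ∀ i j : Fin n, i < j → g i = g j → σ i < σ j := by
  have key : ∀ (j : ℕ) (hj : j < n) (i : Fin n), (i:ℕ) < j → g i = g ⟨j, hj⟩ → σ i < σ ⟨j, hj⟩ := by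
    intro j
    induction j with
    | zero => intro hj i hi; omega
    | succ j' ih =>
        intro hj i hi hgi
        have hj' : j' < n := by omega
        rcases Nat.lt_or_ge (i:ℕ) j' with hlt | hge
        · have hle1 : g i ≤ g ⟨j', hj'⟩ := hmono (by simp [Fin.le_def]; omega)
          have hle2 : g ⟨j', hj'⟩ ≤ g ⟨j'+1, hj⟩ := hmono (by simp [Fin.le_def])
          have he1 : g i = g ⟨j', hj'⟩ := by omega
          have he2 : g ⟨j'+1, hj⟩ = g ⟨j', hj'⟩ := by omega
          exact lt_trans (ih hj' i hlt he1) (hadj j' hj he2)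
        · have hi0 : (i:ℕ) = j' := by omega
          have : i = ⟨j', hj'⟩ := Fin.ext (by simp [hi0])
          rw [this]
          apply hadj j' hj
          rw [← this, hgi]
  intro i j hij hgij
  have : j = ⟨(j:ℕ), j.2⟩ := Fin.ext rfl
  rw [this] at hgij ⊢
  exact key (j:ℕ) j.2 i hij hgij

/-- The labelled-paths set. -/
def S (m n : ℕ) (hn : 0 < n) := {p : Equiv.Perm (Fin n) × (Fin n → ℕ) //
      p.2 ⟨0, hn⟩ = 0 ∧
      (∀ s : Fin n, ∀ h : (s : ℕ) + 1 < n, p.2 ⟨(s : ℕ) + 1, h⟩ ≤ p.2 s + m) ∧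
      (∀ s : Fin n, ∀ h : (s : ℕ) + 1 < n,
        p.2 ⟨(s : ℕ) + 1, h⟩ = p.2 s + m → p.1 s < p.1 ⟨(s : ℕ) + 1, h⟩)}

lemma card_S_eq (m n : ℕ) (hm : 1 ≤ m) (hn : 0 < n) :
    Nat.card (S m n hn) = Nat.card {f : Fin n → ℕ // IsPF m n f} := by
  classical
  -- the map Φ : PF → S
  have hΦmem : ∀ f : {f : Fin n → ℕ // IsPF m n f},
      ((Tuple.sort f.1, fun s : Fin n => m * (s:ℕ) - f.1 (Tuple.sort f.1 s)) :
        Equiv.Perm (Fin n) × (Fin n → ℕ)) ∈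
      {p : Equiv.Perm (Fin n) × (Fin n → ℕ) |
        p.2 ⟨0, hn⟩ = 0 ∧
        (∀ s : Fin n, ∀ h : (s : ℕ) + 1 < n, p.2 ⟨(s : ℕ) + 1, h⟩ ≤ p.2 s + m) ∧
        (∀ s : Fin n, ∀ h : (s : ℕ) + 1 < n,
          p.2 ⟨(s : ℕ) + 1, h⟩ = p.2 s + m → p.1 s < p.1 ⟨(s : ℕ) + 1, h⟩)} := by
    intro f
    have hs : ∀ s : Fin n, f.1 (Tuple.sort f.1 s) ≤ m * (s:ℕ) :=
      (sortedPF_iff_isPF m n hm hn f.1).2 f.2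
    have hmono : Monotone (f.1 ∘ (Tuple.sort f.1)) := Tuple.monotone_sort f.1
    refine ⟨?_, ?_, ?_⟩
    · have := hs ⟨0, hn⟩
      simp only at this ⊢
      omega
    · intro s h
      have h1 := hs s
      have h2 := hs ⟨(s:ℕ)+1, h⟩
      have h3 : f.1 (Tuple.sort f.1 s) ≤ f.1 (Tuple.sort f.1 ⟨(s:ℕ)+1, h⟩) :=
        hmono (show s ≤ ⟨(s:ℕ)+1, h⟩ by simp [Fin.le_def])
      simp only at h1 h2 h3 ⊢
      have hmul : m * ((s:ℕ)+1) = m * (s:ℕ) + m := Nat.mul_succ m (s:ℕ)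
      omega
    · intro s h heq
      have h1 := hs s
      have h2 := hs ⟨(s:ℕ)+1, h⟩
      have h3 : f.1 (Tuple.sort f.1 s) ≤ f.1 (Tuple.sort f.1 ⟨(s:ℕ)+1, h⟩) :=
        hmono (show s ≤ ⟨(s:ℕ)+1, h⟩ by simp [Fin.le_def])
      have hmul : m * ((s:ℕ)+1) = m * (s:ℕ) + m := Nat.mul_succ m (s:ℕ)
      simp only at heq h1 h2 h3
      have hgeq : f.1 (Tuple.sort f.1 s) = f.1 (Tuple.sort f.1 ⟨(s:ℕ)+1, h⟩) := by omega
      exact (Tuple.eq_sort_iff.1 rfl).2 s ⟨(s:ℕ)+1, h⟩ (by simp [Fin.lt_def]) hgeq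
  set Φ : {f : Fin n → ℕ // IsPF m n f} → S m n hn :=
    fun f => ⟨(Tuple.sort f.1, fun s : Fin n => m * (s:ℕ) - f.1 (Tuple.sort f.1 s)), hΦmem f⟩
    with hΦ
  have hbij : Function.Bijective Φ := by
    constructor
    · intro f f' h
      have h1 : Tuple.sort f.1 = Tuple.sort f'.1 := congrArg (fun p => p.1.1) h
      have h2 : (fun s : Fin n => m * (s:ℕ) - f.1 (Tuple.sort f.1 s)) =
          (fun s : Fin n => m * (s:ℕ) - f'.1 (Tuple.sort f'.1 s)) := congrArg (fun p => p.1.2) h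
      have hs : ∀ s : Fin n, f.1 (Tuple.sort f.1 s) ≤ m * (s:ℕ) :=
        (sortedPF_iff_isPF m n hm hn f.1).2 f.2
      have hs' : ∀ s : Fin n, f'.1 (Tuple.sort f'.1 s) ≤ m * (s:ℕ) :=
        (sortedPF_iff_isPF m n hm hn f'.1).2 f'.2
      apply Subtype.ext
      funext i
      have hg : ∀ s : Fin n, f.1 (Tuple.sort f.1 s) = f'.1 (Tuple.sort f'.1 s) := by
        intro s
        have := congrFun h2 s
        have ha := hs s
        have hb := hs' s
        omega
      have := hg ((Tuple.sort f.1).symm i)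
      rw [Equiv.apply_symm_apply] at this
      rw [this, ← h1, Equiv.apply_symm_apply]
    · rintro ⟨⟨σ, a⟩, h0, hle, heq⟩
      dsimp only at h0 hle heq
      -- bound : a s ≤ m * s
      have ha : ∀ (j : ℕ) (hj : j < n), a ⟨j, hj⟩ ≤ m * j := by
        intro j
        induction j with
        | zero => intro hj; simp [show (⟨0, hj⟩ : Fin n) = ⟨0, hn⟩ from rfl, h0]
        | succ j' ih =>
            intro hj
            have hj' : j' < n := by omega
            have := hle ⟨j', hj'⟩ hj
            have := ih hj'
            have hmul : m * (j'+1) = m * j' + m := Nat.mul_succ m j'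
            simp only at *
            omega
      set b : Fin n → ℕ := fun s => m * (s:ℕ) - a s with hb
      have hbadj : ∀ (j:ℕ) (hj : j+1 < n), b ⟨j, by omega⟩ ≤ b ⟨j+1, hj⟩ := by
        intro j hj
        have h1 := hle ⟨j, by omega⟩ hj
        have h2 := ha j (by omega)
        have h3 := ha (j+1) hj
        have hmul : m * (j+1) = m * j + m := Nat.mul_succ m j
        simp only [hb] at *
        omega
      have hbmono : Monotone b := mono_of_adjacent b hbadj
      set f : Fin n → ℕ := fun i => b (σ.symm i) with hf
      have hfσ : ∀ s, f (σ s) = b s := by intro s; simp [hf]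
      have hcomp : (f ∘ σ) = b := funext hfσ
      have hties : ∀ i j : Fin n, i < j → f (σ i) = f (σ j) → σ i < σ j := by
        have := perm_lt_of_ties σ b hbmono ?_
        · intro i j hij hfij
          exact this i j hij (by rwa [hfσ, hfσ] at hfij)
        · intro j hj hbeq
          apply heq ⟨j, by omega⟩ hj
          have h2 := ha j (by omega)
          have h3 := ha (j+1) hj
          have hmul : m * (j+1) = m * j + m := Nat.mul_succ m j
          simp only [hb] at hbeq
          simp only
          omega
      have hσsort : σ = Tuple.sort f := by
        rw [Tuple.eq_sort_iff]
        exact ⟨by rw [hcomp]; exact hbmono, hties⟩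
      have hfsorted : ∀ s : Fin n, f (Tuple.sort f s) ≤ m * (s:ℕ) := by
        intro s
        rw [← hσsort, hfσ]
        simp [hb]
      have hfpf : IsPF m n f := (sortedPF_iff_isPF m n hm hn f).1 hfsorted
      refine ⟨⟨f, hfpf⟩, ?_⟩
      apply Subtype.ext
      show ((Tuple.sort f, fun s : Fin n => m * (s:ℕ) - f (Tuple.sort f s)) :
        Equiv.Perm (Fin n) × (Fin n → ℕ)) = (σ, a)
      rw [← hσsort]
      refine Prod.ext rfl ?_
      funext s
      show m * (s:ℕ) - f (σ s) = a s
      rw [hfσ]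
      simp only [hb]
      have h1 : a ⟨(s:ℕ), s.2⟩ ≤ m * (s:ℕ) := ha (s:ℕ) s.2
      have h2 : (⟨(s:ℕ), s.2⟩ : Fin n) = s := Fin.ext rfl
      rw [h2] at h1
      omega
  exact (Nat.card_eq_of_bijective Φ hbij).symm

end MDyck


/-- For `m ≥ 1`, `n ≥ 1`, the number of pairs `(σ, a)` with `σ` a permutation of
`{1,…,n}` and `a = (a_1,…,a_n)` a sequence of nonnegative integers with `a_1 = 0`,
`a_{s+1} ≤ a_s + m` for all `s`, and `σ(s) < σ(s+1)` whenever `a_{s+1} = a_s + m`,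
equals `(mn+1)^(n-1)`. -/
theorem card_labelled_mDyckPaths (m n : ℕ) (hm : 1 ≤ m) (hn : 0 < n) :
    Nat.card {p : Equiv.Perm (Fin n) × (Fin n → ℕ) //
      p.2 ⟨0, hn⟩ = 0 ∧
      (∀ s : Fin n, ∀ h : (s : ℕ) + 1 < n, p.2 ⟨(s : ℕ) + 1, h⟩ ≤ p.2 s + m) ∧
      (∀ s : Fin n, ∀ h : (s : ℕ) + 1 < n,
        p.2 ⟨(s : ℕ) + 1, h⟩ = p.2 s + m → p.1 s < p.1 ⟨(s : ℕ) + 1, h⟩)} =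
    (m * n + 1) ^ (n - 1) := by
  have h1 : Nat.card (MDyck.S m n hn) = Nat.card {f : Fin n → ℕ // MDyck.IsPF m n f} :=
    MDyck.card_S_eq m n hm hn
  have h2 := MDyck.card_PF (n := n) m hm hn
  have h3 : (m*n+1)^n = (m*n+1)^(n-1) * (m*n+1) := by
    rw [← pow_succ, Nat.sub_add_cancel hn]
  rw [h3] at h2
  have h4 := Nat.eq_of_mul_eq_mul_right (show 0 < m*n+1 by omega) h2
  show Nat.card (MDyck.S m n hn) = (m * n + 1) ^ (n - 1)
  rw [h1, h4]
end

section
/- In the induced module 𝔐 over the algebra 𝔄 (with relations {e[i], e[j]} = {e[i+1], e[j-1]}), for any vector v annihilated by all e[i] with i > 0, and any i ≥ 2 and j ≤ i - 2, one has e[j]e[i] = e[j+1]e[i-1] + e[i-1]e[j+1] - e[i]e[j] as operators, allowing reduction of the rightmost index; consequently the vectors v e[i_1]···e[i_n] with i_1 = 0, i_s ≥ 0, and i_{s+1} ≤ i_s + 1 span the image 𝔓_n of 𝔄_{≥0}^{⊗n} in 𝔐. -/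
/-- The defining relations of the algebra `𝔄`: for all `i j : ℤ`,
`e[i]e[j] + e[j]e[i] = e[i+1]e[j-1] + e[j-1]e[i+1]` in the free associative
`ℂ`-algebra on generators `e[i]`, `i : ℤ`. -/
inductive CatalanRel : FreeAlgebra ℂ ℤ → FreeAlgebra ℂ ℤ → Prop
  | rel (i j : ℤ) : CatalanRel
      (FreeAlgebra.ι ℂ i * FreeAlgebra.ι ℂ j + FreeAlgebra.ι ℂ j * FreeAlgebra.ι ℂ i)
      (FreeAlgebra.ι ℂ (i + 1) * FreeAlgebra.ι ℂ (j - 1) +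
        FreeAlgebra.ι ℂ (j - 1) * FreeAlgebra.ι ℂ (i + 1))

/-- The algebra `𝔄` with generators `e[i]`, `i ∈ ℤ`, and relations
`{e[i], e[j]} = {e[i+1], e[j-1]}`. -/
abbrev CatalanAlg : Type := RingQuot CatalanRel

/-- The generator `e[i]` of `𝔄`. -/
noncomputable def gen (i : ℤ) : CatalanAlg :=
  RingQuot.mkAlgHom ℂ CatalanRel (FreeAlgebra.ι ℂ i)


lemma gen_rel (x y : ℤ) : gen x * gen y + gen y * gen x
    = gen (x+1) * gen (y-1) + gen (y-1) * gen (x+1) := by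
  unfold gen
  rw [← map_mul, ← map_mul, ← map_add, ← map_mul, ← map_mul, ← map_add]
  exact RingQuot.mkAlgHom_rel ℂ (CatalanRel.rel x y)

lemma gen_red (x y : ℤ) : gen x * gen y
    = gen (x+1) * gen (y-1) + gen (y-1) * gen (x+1) - gen y * gen x := by
  rw [eq_sub_iff_add_eq]; exact gen_rel x y

noncomputable def gn (m : ℕ) : CatalanAlg := gen (m : ℤ)

def M : List ℕ → ℕ
  | [] => 0
  | a :: t => a + t.sum + M t

lemma M_append (l₁ l₂ : List ℕ) :
    M (l₁ ++ l₂) = M l₁ + l₁.length * l₂.sum + M l₂ := by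
  induction l₁ with
  | nil => simp [M]
  | cons a t ih => simp only [List.cons_append, M, List.append_eq, List.sum_append, List.length_cons, ih]; ring

def Sset (n : ℕ) : Set CatalanAlg :=
  {x : CatalanAlg | ∃ j : Fin n → ℕ,
      (∀ h : 0 < n, j ⟨0, h⟩ = 0) ∧
      (∀ s : Fin n, ∀ h : (s : ℕ) + 1 < n, j ⟨(s : ℕ) + 1, h⟩ ≤ j s + 1) ∧
      x = (List.ofFn fun s => gen (j s)).prod} ∪
   {x : CatalanAlg | ∃ k : ℤ, 0 < k ∧ ∃ a : CatalanAlg, x = gen k * a}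

lemma decomp (l : List ℕ) (s : ℕ) (h : s + 1 < l.length) :
    l = l.take s ++ l[s]'(Nat.lt_of_succ_lt h) :: l[s+1]'h :: l.drop (s+2) := by
  conv_lhs => rw [← List.take_append_drop s l]
  congr 1
  rw [List.drop_eq_getElem_cons (Nat.lt_of_succ_lt h), List.drop_eq_getElem_cons h]

lemma M_mid (l₁ l₂ : List ℕ) (a b : ℕ) :
    M (l₁ ++ a :: b :: l₂) =
      M l₁ + l₁.length * (a + b + l₂.sum) + a + 2*b + 2*l₂.sum + M l₂ := by
  rw [M_append]; simp only [M, List.sum_cons]; ring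

lemma prod_mid (l₁ l₂ : List ℕ) (a b : ℕ) :
    ((l₁ ++ a :: b :: l₂).map gn).prod
      = (l₁.map gn).prod * (gn a * gn b) * (l₂.map gn).prod := by
  simp [List.prod_cons, mul_assoc]

lemma gn_red (a b : ℕ) (hb : 1 ≤ b) :
    gn a * gn b = gn (a+1) * gn (b-1) + gn (b-1) * gn (a+1) - gn b * gn a := by
  unfold gn
  rw [Nat.cast_add, Nat.cast_one, Nat.cast_sub hb, Nat.cast_one]
  exact gen_red (a : ℤ) (b : ℤ)

lemma ofFn_gn (l : List ℕ) :
    (List.ofFn fun s : Fin l.length => gn (l[(s:ℕ)])) = l.map gn := by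
  conv_rhs => rw [← List.ofFn_getElem (xs := l)]
  rw [List.map_ofFn]
  rfl

lemma main : ∀ (N : ℕ) (l : List ℕ), M l = N →
    (l.map gn).prod ∈ Submodule.span ℂ (Sset l.length) := by
  intro N
  induction N using Nat.strong_induction_on with
  | _ N IH =>
    intro l hM
    by_cases hv : ∃ s : ℕ, ∃ h : s + 1 < l.length,
        l[s]'(Nat.lt_of_succ_lt h) + 2 ≤ l[s+1]'h
    · -- there is a violation: reduce
      obtain ⟨s, h1, hlt⟩ := hv
      have hd := decomp l s h1
      set A := l[s]'(Nat.lt_of_succ_lt h1) with hA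
      set B := l[s+1]'h1 with hB
      set l₁ := l.take s with hl₁
      set l₂ := l.drop (s+2) with hl₂
      have hB1 : 1 ≤ B := by omega
      have key : (l.map gn).prod
          = ((l₁ ++ (A+1) :: (B-1) :: l₂).map gn).prod
            + ((l₁ ++ (B-1) :: (A+1) :: l₂).map gn).prod
            - ((l₁ ++ B :: A :: l₂).map gn).prod := by
        conv_lhs => rw [hd]
        rw [prod_mid, prod_mid, prod_mid, prod_mid, gn_red A B hB1]
        simp only [mul_sub, sub_mul, mul_add, add_mul, mul_assoc]
      have hMl : M l = M l₁ + l₁.length * (A + B + l₂.sum) + A + 2*B + 2*l₂.sum + M l₂ := by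
        rw [hd, M_mid]
      have hlen : ∀ u v : ℕ, (l₁ ++ u :: v :: l₂).length = l.length := by
        intro u v
        conv_rhs => rw [hd]
        simp
      have mem : ∀ u v : ℕ, u + v = A + B → u + 2*v < A + 2*B →
          ((l₁ ++ u :: v :: l₂).map gn).prod ∈ Submodule.span ℂ (Sset l.length) := by
        intro u v huv hm
        have hMlt : M (l₁ ++ u :: v :: l₂) < N := by
          rw [M_mid, huv, ← hM, hMl]
          omega
        have := IH _ hMlt (l₁ ++ u :: v :: l₂) rfl
        rwa [hlen u v] at this
      rw [key]
      exact sub_mem (add_mem (mem _ _ (by omega) (by omega)) (mem _ _ (by omega) (by omega)))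
        (mem _ _ (by omega) (by omega))
    · -- no violation
      match l with
      | [] =>
        apply Submodule.subset_span
        left
        exact ⟨finZeroElim, fun h => absurd h (by simp), fun s => s.elim0, by simp⟩
      | a :: t =>
        rcases Nat.eq_zero_or_pos a with ha | ha
        · -- head is 0 and no violation: admissible
          push_neg at hv
          apply Submodule.subset_span
          left
          refine ⟨fun s : Fin (a::t).length => (a::t)[(s:ℕ)], fun h => ha, ?_, ?_⟩
          · intro s h
            have := hv (s:ℕ) h
            show (a::t)[(s:ℕ)+1] ≤ (a::t)[(s:ℕ)] + 1
            omega
          · rw [show (List.ofFn fun s : Fin (a::t).length => gen (((a::t)[(s:ℕ)] : ℕ) : ℤ))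
                = (a::t).map gn from ofFn_gn (a::t)]
        · -- head positive: in the right ideal
          apply Submodule.subset_span
          right
          exact ⟨(a : ℤ), by exact_mod_cast ha, (t.map gn).prod, by simp [gn, List.prod_cons]⟩


/-- In the algebra `𝔄` (with relations `{e[i],e[j]} = {e[i+1],e[j-1]}`), for any
`i ≥ 2` and `j ≤ i - 2` one has
`e[j]e[i] = e[j+1]e[i-1] + e[i-1]e[j+1] - e[i]e[j]`, allowing reduction of the
rightmost index; consequently, modulo the right ideal generated by the `e[k]` with
`k > 0` (which annihilates the vacuum `v` of the induced module `𝔐`), the vectors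
`v e[i_1]⋯e[i_n]` with `i_1 = 0`, `i_s ≥ 0` and `i_{s+1} ≤ i_s + 1` span the image
`𝔓_n` of `𝔄_{≥0}^{⊗n}` in `𝔐`. -/
theorem reduction_and_spanning :
    (∀ i j : ℤ, 2 ≤ i → j ≤ i - 2 →
      gen j * gen i =
        gen (j + 1) * gen (i - 1) + gen (i - 1) * gen (j + 1) - gen i * gen j) ∧
    (∀ (n : ℕ) (i : Fin n → ℕ),
      (List.ofFn fun s => gen (i s)).prod ∈
        Submodule.span ℂ
          ({x : CatalanAlg | ∃ j : Fin n → ℕ,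
              (∀ h : 0 < n, j ⟨0, h⟩ = 0) ∧
              (∀ s : Fin n, ∀ h : (s : ℕ) + 1 < n, j ⟨(s : ℕ) + 1, h⟩ ≤ j s + 1) ∧
              x = (List.ofFn fun s => gen (j s)).prod} ∪
           {x : CatalanAlg | ∃ k : ℤ, 0 < k ∧ ∃ a : CatalanAlg, x = gen k * a})) := by
  constructor
  · intro i j _ _
    exact gen_red j i
  · intro n i
    have h := main (M (List.ofFn i)) (List.ofFn i) rfl
    rw [show ((List.ofFn i).map gn) = List.ofFn fun s => gen ((i s : ℕ) : ℤ) by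
      rw [List.map_ofFn]; rfl] at h
    simp only [List.length_ofFn] at h
    exact h
end
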